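/- arXiv:1910.05661 — 2 statements merged into one kernel-verified Lean document; each statement's English description precedes it below -/
import Mathlib

section
/- Suppose that A, B, C form a 3-phase length 2m periodic Golay sequence triad, where m is a positive integer with m ≡ 2 (mod 3). Then exactly two of the following three equations hold: ∏_{i=0}^{m−1} A(2i) = ∏_{i=0}^{m−1} A(2i+1); ∏_{i=0}^{m−1} B(2i) = ∏_{i=0}^{m−1} B(2i+1); ∏_{i=0}^{m−1} C(2i) = ∏_{i=0}^{m−1} C(2i+1). -/
open scoped BigOperators

/-- `ω = e^{2πi/3}`, a primitive cube root of unity. -/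
noncomputable def ω : ℂ := Complex.exp (2 * Real.pi * Complex.I / 3)

/-- A length-`s` sequence: a function `ℤ → ℂ` vanishing outside `{0, …, s-1}`. -/
def IsLenSeq (s : ℕ) (A : ℤ → ℂ) : Prop :=
  ∀ i : ℤ, i < 0 ∨ (s : ℤ) ≤ i → A i = 0

/-- A 3-phase length-`s` sequence: a length-`s` sequence whose entries on
`{0, …, s-1}` lie in `{1, ω, ω²}`. -/
def IsThreePhaseSeq (s : ℕ) (A : ℤ → ℂ) : Prop :=
  IsLenSeq s A ∧ ∀ i : ℤ, 0 ≤ i → i < (s : ℤ) → A i ∈ ({1, ω, ω ^ 2} : Set ℂ)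

/-- Aperiodic autocorrelation function `C_A(u) = Σ_{i ∈ ℤ} A(i) conj(A(i+u))`. -/
noncomputable def aperCorr (A : ℤ → ℂ) (u : ℤ) : ℂ :=
  ∑' i : ℤ, A i * (starRingEnd ℂ) (A (i + u))

/-- Three 3-phase length-`s` sequences forming a 3-phase Golay sequence triad. -/
def GolaySeqTriad (s : ℕ) (A B C : ℤ → ℂ) : Prop :=
  IsThreePhaseSeq s A ∧ IsThreePhaseSeq s B ∧ IsThreePhaseSeq s C ∧
    ∀ u : ℤ, u ≠ 0 → aperCorr A u + aperCorr B u + aperCorr C u = 0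

/-- Periodic autocorrelation function
`R_A(u) = Σ_{i=0}^{s−1} A(i) conj(A((i+u) mod s))`. -/
noncomputable def perCorr (s : ℕ) (A : ℤ → ℂ) (u : ℤ) : ℂ :=
  ∑ i ∈ Finset.range s, A i * (starRingEnd ℂ) (A (((i : ℤ) + u) % (s : ℤ)))

/-- Three 3-phase length-`s` sequences forming a 3-phase periodic Golay sequence
triad. -/
def PeriodicGolaySeqTriad (s : ℕ) (A B C : ℤ → ℂ) : Prop :=
  IsThreePhaseSeq s A ∧ IsThreePhaseSeq s B ∧ IsThreePhaseSeq s C ∧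
    ∀ u : ℤ, 0 < u → u < (s : ℤ) →
      perCorr s A u + perCorr s B u + perCorr s C u = 0

lemma hωprim : IsPrimitiveRoot ω 3 := by
  have := Complex.isPrimitiveRoot_exp 3 (by norm_num)
  simpa [ω] using this

lemma ω_pow3 : ω ^ 3 = 1 := hωprim.pow_eq_one

lemma ω_ne_one : ω ≠ 1 := hωprim.ne_one (by norm_num)

lemma ω_sum : 1 + ω + ω ^ 2 = 0 := by
  have h : (ω - 1) * (1 + ω + ω ^ 2) = ω ^ 3 - 1 := by ring
  rw [ω_pow3, sub_self] at h
  rcases mul_eq_zero.1 h with h1 | h2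
  · exact absurd (by linear_combination h1) ω_ne_one
  · exact h2

lemma ω_abs : ‖ω‖ = 1 := by
  rw [ω, Complex.norm_exp]
  norm_num [Complex.div_re]

lemma ω_ne_zero : ω ≠ 0 := by
  intro h
  have h2 := ω_abs
  rw [h] at h2
  simpa using h2

lemma conj_ω : (starRingEnd ℂ) ω = ω ^ 2 := by
  have h1 : ω⁻¹ = (starRingEnd ℂ) ω := Complex.inv_eq_conj ω_abs
  have h2 : ω * ω ^ 2 = 1 := by rw [← pow_succ']; exact ω_pow3
  rw [← h1]
  exact inv_eq_of_mul_eq_one_right h2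

lemma ω_sq_ne_one : ω ^ 2 ≠ 1 := hωprim.pow_ne_one_of_pos_of_lt (by norm_num) (by norm_num)

lemma ω_sq_ne_ω : ω ^ 2 ≠ ω := by
  intro h
  apply ω_ne_one
  have : ω * ω = ω * 1 := by linear_combination h
  exact mul_left_cancel₀ ω_ne_zero this

lemma negOnePowCongr (a b : ℕ) (h : a % 2 = b % 2) : (-1:ℂ)^a = (-1:ℂ)^b := by
  rw [← Nat.div_add_mod a 2, ← Nat.div_add_mod b 2, pow_add, pow_add, pow_mul, pow_mul, h]
  norm_num

lemma sum_range_two_mul {M : Type*} [AddCommMonoid M] (n : ℕ) (f : ℕ → M) :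
    ∑ i ∈ Finset.range (2*n), f i
      = (∑ i ∈ Finset.range n, f (2*i)) + ∑ i ∈ Finset.range n, f (2*i+1) := by
  induction n with
  | zero => simp
  | succ n ih =>
    have h : 2*(n+1) = (2*n)+1+1 := by ring
    rw [h, Finset.sum_range_succ, Finset.sum_range_succ, ih,
      Finset.sum_range_succ (fun i => f (2*i)), Finset.sum_range_succ (fun i => f (2*i+1))]
    abel

lemma corr_eval (m : ℕ) (A : ℤ → ℂ) :
    ∑ u ∈ Finset.range (2*m), (-1:ℂ)^u * perCorr (2*m) A u
      = (∑ i ∈ Finset.range (2*m), (-1:ℂ)^i * A i) *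
        (starRingEnd ℂ) (∑ i ∈ Finset.range (2*m), (-1:ℂ)^i * A i) := by
  rcases Nat.eq_zero_or_pos m with hm | hm
  · simp [hm]
  set s : ℕ := 2*m with hs
  have hspos : (0:ℤ) < (s:ℤ) := by positivity
  have hsne : (s:ℤ) ≠ 0 := by positivity
  rw [map_sum, Finset.sum_mul_sum]
  simp only [perCorr, Finset.mul_sum, map_mul, map_pow, map_neg, map_one]
  rw [Finset.sum_comm]
  refine Finset.sum_congr rfl (fun i hi => ?_)
  have hi' : i < s := Finset.mem_range.1 hi
  refine Finset.sum_nbij' (fun u => (((i:ℤ)+u) % (s:ℤ)).toNat)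
    (fun v => (((v:ℤ) - i + s) % (s:ℤ)).toNat) ?_ ?_ ?_ ?_ ?_
  · intro u hu
    show (((i:ℤ)+u) % (s:ℤ)).toNat ∈ Finset.range s
    rw [Finset.mem_range]
    have h1 : ((i:ℤ)+u) % s < s := Int.emod_lt_of_pos _ hspos
    have h0 : 0 ≤ ((i:ℤ)+u) % s := Int.emod_nonneg _ hsne
    omega
  · intro v hv
    show (((v:ℤ) - i + s) % (s:ℤ)).toNat ∈ Finset.range s
    rw [Finset.mem_range]
    have h1 : ((v:ℤ) - i + s) % s < s := Int.emod_lt_of_pos _ hspos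
    have h0 : 0 ≤ ((v:ℤ) - i + s) % s := Int.emod_nonneg _ hsne
    omega
  · intro u hu
    have hu' : (u:ℤ) < s := by exact_mod_cast Finset.mem_range.1 hu
    have h0 : 0 ≤ ((i:ℤ)+u) % s := Int.emod_nonneg _ hsne
    show ((((((i:ℤ)+u) % (s:ℤ)).toNat : ℤ) - i + s) % (s:ℤ)).toNat = u
    rw [Int.toNat_of_nonneg h0]
    have : (((i:ℤ)+u) % s - i + s) % s = (u:ℤ) := by
      rw [sub_eq_add_neg, add_assoc, Int.emod_add_emod]
      have : (i:ℤ) + u + (-i + s) = u + 1 * s := by ring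
      rw [this, Int.add_mul_emod_self_right]
      exact Int.emod_eq_of_lt (by positivity) hu'
    rw [this]
    simp
  · intro v hv
    have hv' : (v:ℤ) < s := by exact_mod_cast Finset.mem_range.1 hv
    have h0 : 0 ≤ ((v:ℤ) - i + s) % s := Int.emod_nonneg _ hsne
    show (((i:ℤ) + ((((v:ℤ) - i + s) % (s:ℤ)).toNat : ℤ)) % (s:ℤ)).toNat = v
    rw [Int.toNat_of_nonneg h0]
    have : ((i:ℤ) + ((v:ℤ) - i + s) % s) % s = (v:ℤ) := by
      rw [Int.add_emod_emod]
      have : (i:ℤ) + ((v:ℤ) - i + s) = v + 1 * s := by ring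
      rw [this, Int.add_mul_emod_self_right]
      exact Int.emod_eq_of_lt (by positivity) hv'
    rw [this]
    simp
  · intro u hu
    have hu' : u < s := Finset.mem_range.1 hu
    have h0 : 0 ≤ ((i:ℤ)+u) % s := Int.emod_nonneg _ hsne
    have hcast : ((((i:ℤ)+u) % (s:ℤ)).toNat : ℤ) = ((i:ℤ)+u) % s := Int.toNat_of_nonneg h0
    have hsign : (-1:ℂ)^u = (-1:ℂ)^i * (-1:ℂ)^((((i:ℤ)+u) % (s:ℤ)).toNat) := by
      rw [← pow_add]
      apply negOnePowCongr
      have h2 : (2:ℤ) ∣ (s:ℤ) := ⟨(m:ℤ), by push_cast [hs]; ring⟩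
      have hmod : ((((i:ℤ)+u) % (s:ℤ)).toNat : ℤ) % 2 = ((i:ℤ)+u) % 2 := by
        rw [hcast]; exact Int.emod_emod_of_dvd _ h2
      have : ((i + (((i:ℤ)+u) % (s:ℤ)).toNat : ℕ) : ℤ) % 2 = ((u:ℕ):ℤ) % 2 := by
        push_cast
        rw [Int.add_emod, hmod, ← Int.add_emod]
        have : (i:ℤ) + ((i:ℤ)+u) = u + i * 2 := by ring
        rw [this, Int.add_mul_emod_self_right]
      omega
    rw [hsign, hcast]
    ring

lemma hval (v : ZMod 3) : ω ^ v.val =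
    (if v = 0 then (1:ℂ) else 0) + (if v = 1 then (1:ℂ) else 0) * ω
      + (if v = 2 then (1:ℂ) else 0) * ω^2 := by
  have h3 : v = 0 ∨ v = 1 ∨ v = 2 := by revert v; decide
  rcases h3 with rfl|rfl|rfl
  · rw [if_pos rfl, if_neg (by decide), if_neg (by decide),
      show (0:ZMod 3).val = 0 from rfl]
    ring
  · rw [if_neg (by decide), if_pos rfl, if_neg (by decide),
      show (1:ZMod 3).val = 1 from rfl]
    ring
  · rw [if_neg (by decide), if_neg (by decide), if_pos rfl,
      show (2:ZMod 3).val = 2 from rfl]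
    ring

lemma ind_sum (v : ZMod 3) :
    (if v = 0 then (1:ℤ) else 0) + (if v = 1 then (1:ℤ) else 0)
      + (if v = 2 then (1:ℤ) else 0) = 1 := by
  revert v; decide

lemma ind_diff (v : ZMod 3) :
    ((if v = 1 then (1:ZMod 3) else 0) - (if v = 2 then (1:ZMod 3) else 0)) = v := by
  revert v; decide

lemma zmod_sq (x y : ZMod 3) : x^2 + x*y + y^2 = (x - y)^2 := by revert x y; decide

lemma zmod_three (x y z : ZMod 3) (h : x^2+y^2+z^2 = 1) :
    (x=0∧y=0∧¬z=0)∨(x=0∧¬y=0∧z=0)∨(¬x=0∧y=0∧z=0) := by revert h; revert x y z; decide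

lemma key (m : ℕ) (hm : 0 < m) (X : ℤ → ℂ) (hX : IsThreePhaseSeq (2*m) X) :
    ∃ (t : ℤ) (d : ZMod 3),
      ((∑ i ∈ Finset.range (2*m), (-1:ℂ)^i * X i) *
        (starRingEnd ℂ) (∑ i ∈ Finset.range (2*m), (-1:ℂ)^i * X i) = ((3*t : ℤ) : ℂ)) ∧
      ((t : ZMod 3) = d^2) ∧
      ((∏ i ∈ Finset.range m, X (2*(i:ℤ)) = ∏ i ∈ Finset.range m, X (2*(i:ℤ)+1)) ↔ d = 0) ∧
      perCorr (2*m) X 0 = ((2*m : ℕ) : ℂ) := by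
  obtain ⟨hlen, hmem⟩ := hX
  set a : ℤ → ZMod 3 := fun i => if X i = 1 then 0 else if X i = ω then 1 else 2 with ha_def
  have ha : ∀ i : ℤ, 0 ≤ i → i < ((2*m : ℕ) : ℤ) → X i = ω ^ (a i).val := by
    intro i h0 h1
    have hm := hmem i h0 h1
    simp only [Set.mem_insert_iff, Set.mem_singleton_iff] at hm
    simp only [ha_def]
    rcases hm with h|h|h
    · rw [h, if_pos rfl, show (0:ZMod 3).val = 0 from rfl, pow_zero]
    · rw [h, if_neg ω_ne_one, if_pos rfl, show (1:ZMod 3).val = 1 from rfl, pow_one]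
    · rw [h, if_neg ω_sq_ne_one, if_neg ω_sq_ne_ω, show (2:ZMod 3).val = 2 from rfl]
  -- integer indicator sums
  set n0 : ℤ := ∑ i ∈ Finset.range (2*m), (-1:ℤ)^i * (if a i = 0 then 1 else 0) with hn0
  set n1 : ℤ := ∑ i ∈ Finset.range (2*m), (-1:ℤ)^i * (if a i = 1 then 1 else 0) with hn1
  set n2 : ℤ := ∑ i ∈ Finset.range (2*m), (-1:ℤ)^i * (if a i = 2 then 1 else 0) with hn2
  refine ⟨n1^2 + n1*n2 + n2^2,
    (∑ i ∈ Finset.range m, a (2*(i:ℤ))) - ∑ i ∈ Finset.range m, a (2*(i:ℤ)+1),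
    ?_, ?_, ?_, ?_⟩
  · -- S * conj S = 3 t
    have hS : ∑ i ∈ Finset.range (2*m), (-1:ℂ)^i * X i
        = (n0:ℂ) + (n1:ℂ)*ω + (n2:ℂ)*ω^2 := by
      have step : ∀ i ∈ Finset.range (2*m), (-1:ℂ)^i * X i
          = ((-1:ℤ)^i * (if a i = 0 then 1 else 0) : ℤ)
            + ((-1:ℤ)^i * (if a i = 1 then 1 else 0) : ℤ) * ω
            + ((-1:ℤ)^i * (if a i = 2 then 1 else 0) : ℤ) * ω^2 := by
        intro i hi
        have hi' := Finset.mem_range.1 hi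
        rw [ha i (by positivity) (by exact_mod_cast hi'), hval (a i)]
        push_cast
        split_ifs <;> ring
      rw [Finset.sum_congr rfl step]
      rw [Finset.sum_add_distrib, Finset.sum_add_distrib, ← Finset.sum_mul, ← Finset.sum_mul]
      push_cast [hn0, hn1, hn2]
      ring
    have h0sum : n0 + n1 + n2 = 0 := by
      rw [hn0, hn1, hn2, ← Finset.sum_add_distrib, ← Finset.sum_add_distrib]
      have : ∀ i ∈ Finset.range (2*m),
          ((-1:ℤ)^i * (if a i = 0 then 1 else 0) + (-1:ℤ)^i * (if a i = 1 then 1 else 0))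
            + (-1:ℤ)^i * (if a i = 2 then 1 else 0) = (-1:ℤ)^i := by
        intro i _
        have := ind_sum (a i)
        linear_combination ((-1:ℤ)^i) * this
      rw [Finset.sum_congr rfl this, sum_range_two_mul]
      have h1 : ∀ i ∈ Finset.range m, (-1:ℤ)^(2*i) = 1 := by
        intro i _; rw [pow_mul]; norm_num
      have h2 : ∀ i ∈ Finset.range m, (-1:ℤ)^(2*i+1) = -1 := by
        intro i _; rw [pow_succ, pow_mul]; norm_num
      rw [Finset.sum_congr rfl h1, Finset.sum_congr rfl h2]
      simp
    rw [hS, map_add, map_add, map_mul, map_mul, map_pow, conj_ω]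
    rw [map_intCast, map_intCast, map_intCast]
    have hz : n0 = -n1 - n2 := by linarith [h0sum]
    have hn0' : (n0:ℂ) = -(n1:ℂ) - n2 := by exact_mod_cast congrArg (fun z : ℤ => (z:ℂ)) hz
    rw [hn0']
    push_cast
    linear_combination ((n2:ℂ)^2*ω^3 + (n1:ℂ)*(n2:ℂ)*ω^2 - (n2:ℂ)^2*ω + (n1:ℂ)^2 + (n2:ℂ)^2) * ω_pow3
      - ((n1:ℂ)^2 + (n1:ℂ)*(n2:ℂ) + (n2:ℂ)^2) * ω_sum
  · -- t mod 3 = d^2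
    have cast_n : ∀ k : ZMod 3,
        ((∑ i ∈ Finset.range (2*m), (-1:ℤ)^i * (if a i = k then 1 else 0) : ℤ) : ZMod 3)
          = ∑ i ∈ Finset.range (2*m), (-1:ZMod 3)^i * (if a i = k then 1 else 0) := by
      intro k
      push_cast
      refine Finset.sum_congr rfl fun i _ => ?_
      split_ifs <;> simp
    have hd : ((n1:ℤ) : ZMod 3) - ((n2:ℤ) : ZMod 3)
        = (∑ i ∈ Finset.range m, a (2*(i:ℤ))) - ∑ i ∈ Finset.range m, a (2*(i:ℤ)+1) := by
      rw [hn1, hn2, cast_n 1, cast_n 2, ← Finset.sum_sub_distrib]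
      have e1 : ∀ i ∈ Finset.range (2*m),
          ((-1:ZMod 3)^i * (if a i = 1 then 1 else 0) - (-1:ZMod 3)^i * (if a i = 2 then 1 else 0))
            = (-1:ZMod 3)^i * a i := by
        intro i _
        rw [← mul_sub, ind_diff]
      rw [Finset.sum_congr rfl e1, sum_range_two_mul]
      have hA : ∑ i ∈ Finset.range m, (-1:ZMod 3)^(2*i) * a ((2*i : ℕ) : ℤ)
          = ∑ i ∈ Finset.range m, a (2*(i:ℤ)) := by
        refine Finset.sum_congr rfl fun i _ => ?_
        have harg : ((2*i : ℕ) : ℤ) = 2*(i:ℤ) := by push_cast; ring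
        rw [pow_mul, harg]
        norm_num
      have hB : ∑ i ∈ Finset.range m, (-1:ZMod 3)^(2*i+1) * a ((2*i+1 : ℕ) : ℤ)
          = ∑ i ∈ Finset.range m, -(a (2*(i:ℤ)+1)) := by
        refine Finset.sum_congr rfl fun i _ => ?_
        have harg : ((2*i+1 : ℕ) : ℤ) = 2*(i:ℤ)+1 := by push_cast; ring
        rw [pow_succ, pow_mul, harg]
        norm_num
      rw [hA, hB, Finset.sum_neg_distrib]
      ring
    push_cast
    rw [zmod_sq, hd]
  · -- products iff
    have hpe : ∏ i ∈ Finset.range m, X (2*(i:ℤ))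
        = ω ^ (∑ i ∈ Finset.range m, (a (2*(i:ℤ))).val) := by
      rw [← Finset.prod_pow_eq_pow_sum]
      refine Finset.prod_congr rfl fun i hi => ?_
      have hi' := Finset.mem_range.1 hi
      exact ha _ (by positivity) (by push_cast; omega)
    have hpo : ∏ i ∈ Finset.range m, X (2*(i:ℤ)+1)
        = ω ^ (∑ i ∈ Finset.range m, (a (2*(i:ℤ)+1)).val) := by
      rw [← Finset.prod_pow_eq_pow_sum]
      refine Finset.prod_congr rfl fun i hi => ?_
      have hi' := Finset.mem_range.1 hi
      exact ha _ (by positivity) (by push_cast; omega)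
    have hiff : ∀ p q : ℕ, (ω ^ p = ω ^ q ↔ ((p : ZMod 3) = (q : ZMod 3))) := by
      intro p q
      rw [ZMod.natCast_eq_natCast_iff, Nat.modEq_iff_dvd]
      rw [← hωprim.zpow_eq_one_iff_dvd]
      rw [zpow_sub₀ ω_ne_zero, zpow_natCast, zpow_natCast,
        div_eq_one_iff_eq (pow_ne_zero _ ω_ne_zero), eq_comm]
    rw [hpe, hpo, hiff]
    have cv : ∀ g : ℕ → ZMod 3, ((∑ i ∈ Finset.range m, (g i).val : ℕ) : ZMod 3)
        = ∑ i ∈ Finset.range m, g i := by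
      intro g
      push_cast
      refine Finset.sum_congr rfl fun i _ => ?_
      rw [ZMod.natCast_val, ZMod.cast_id]
    rw [cv (fun i => a (2*(i:ℤ))), cv (fun i => a (2*(i:ℤ)+1)), sub_eq_zero]
  · -- perCorr at 0
    unfold perCorr
    have e1 : ∀ i ∈ Finset.range (2*m), X i * (starRingEnd ℂ) (X (((i:ℤ) + 0) % ((2*m : ℕ):ℤ))) = 1 := by
      intro i hi
      have hi' := Finset.mem_range.1 hi
      have harg : ((i:ℤ) + 0) % ((2*m : ℕ):ℤ) = (i:ℤ) := by
        rw [add_zero]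
        exact Int.emod_eq_of_lt (by positivity) (by exact_mod_cast hi')
      rw [harg, ha i (by positivity) (by exact_mod_cast hi'), map_pow, conj_ω,
        ← pow_mul, ← pow_add]
      have : (a i).val + 2 * (a i).val = 3 * (a i).val := by ring
      rw [this, pow_mul, ω_pow3, one_pow]
    rw [Finset.sum_congr rfl e1]
    simp

/-- If `A, B, C` form a 3-phase length-`2m` periodic Golay sequence triad with
`m ≡ 2 (mod 3)`, then exactly two of the three equations
`∏ A(2i) = ∏ A(2i+1)`, `∏ B(2i) = ∏ B(2i+1)`, `∏ C(2i) = ∏ C(2i+1)` hold. -/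
theorem periodic_golay_triad_exactly_two_of_three (m : ℕ) (hm : 0 < m)
    (hmod : m % 3 = 2) (A B C : ℤ → ℂ)
    (h : PeriodicGolaySeqTriad (2 * m) A B C) :
    ((∏ i ∈ Finset.range m, A (2 * (i : ℤ)) = ∏ i ∈ Finset.range m, A (2 * (i : ℤ) + 1)) ∧
     (∏ i ∈ Finset.range m, B (2 * (i : ℤ)) = ∏ i ∈ Finset.range m, B (2 * (i : ℤ) + 1)) ∧
     ¬ (∏ i ∈ Finset.range m, C (2 * (i : ℤ)) = ∏ i ∈ Finset.range m, C (2 * (i : ℤ) + 1))) ∨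
    ((∏ i ∈ Finset.range m, A (2 * (i : ℤ)) = ∏ i ∈ Finset.range m, A (2 * (i : ℤ) + 1)) ∧
     ¬ (∏ i ∈ Finset.range m, B (2 * (i : ℤ)) = ∏ i ∈ Finset.range m, B (2 * (i : ℤ) + 1)) ∧
     (∏ i ∈ Finset.range m, C (2 * (i : ℤ)) = ∏ i ∈ Finset.range m, C (2 * (i : ℤ) + 1))) ∨
    (¬ (∏ i ∈ Finset.range m, A (2 * (i : ℤ)) = ∏ i ∈ Finset.range m, A (2 * (i : ℤ) + 1)) ∧
     (∏ i ∈ Finset.range m, B (2 * (i : ℤ)) = ∏ i ∈ Finset.range m, B (2 * (i : ℤ) + 1)) ∧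
     (∏ i ∈ Finset.range m, C (2 * (i : ℤ)) = ∏ i ∈ Finset.range m, C (2 * (i : ℤ) + 1))) := by
  obtain ⟨hA3, hB3, hC3, hR⟩ := h
  obtain ⟨tA, dA, hSA, htA, hprodA, h0A⟩ := key m hm A hA3
  obtain ⟨tB, dB, hSB, htB, hprodB, h0B⟩ := key m hm B hB3
  obtain ⟨tC, dC, hSC, htC, hprodC, h0C⟩ := key m hm C hC3
  have hsum : ∑ u ∈ Finset.range (2*m), (-1:ℂ)^u *
      (perCorr (2*m) A u + perCorr (2*m) B u + perCorr (2*m) C u)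
        = ((2*m : ℕ) : ℂ) * 3 := by
    rw [Finset.sum_eq_single 0]
    · push_cast
      rw [h0A, h0B, h0C]
      push_cast
      ring
    · intro u hu hne
      have h1 : (0:ℤ) < (u:ℤ) := by exact_mod_cast Nat.pos_of_ne_zero hne
      have h2 : ((u:ℕ):ℤ) < ((2*m : ℕ):ℤ) := by exact_mod_cast Finset.mem_range.1 hu
      rw [hR u h1 h2, mul_zero]
    · intro h0
      exact absurd (Finset.mem_range.2 (by positivity)) h0
  have hsplit : ∑ u ∈ Finset.range (2*m), (-1:ℂ)^u *
      (perCorr (2*m) A u + perCorr (2*m) B u + perCorr (2*m) C u)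
        = (∑ u ∈ Finset.range (2*m), (-1:ℂ)^u * perCorr (2*m) A u)
          + (∑ u ∈ Finset.range (2*m), (-1:ℂ)^u * perCorr (2*m) B u)
          + (∑ u ∈ Finset.range (2*m), (-1:ℂ)^u * perCorr (2*m) C u) := by
    rw [← Finset.sum_add_distrib, ← Finset.sum_add_distrib]
    exact Finset.sum_congr rfl fun u _ => by ring
  rw [hsplit, corr_eval, corr_eval, corr_eval, hSA, hSB, hSC] at hsum
  have hZ : tA + tB + tC = 2 * m := by
    have hcx : ((3*tA + 3*tB + 3*tC : ℤ) : ℂ) = ((3 * (2*m : ℕ) : ℤ) : ℂ) := by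
      push_cast at hsum ⊢
      linear_combination hsum
    have h3 : (3*tA + 3*tB + 3*tC : ℤ) = 3*((2*m:ℕ):ℤ) := by exact_mod_cast hcx
    omega
  have hz3 : dA^2 + dB^2 + dC^2 = 1 := by
    have hc : ((tA + tB + tC : ℤ) : ZMod 3) = (((2*m : ℕ) : ℤ) : ZMod 3) := by
      rw [hZ]; push_cast; ring
    rw [Int.cast_add, Int.cast_add, htA, htB, htC] at hc
    rw [hc]
    have hm3 : ((m : ℕ) : ZMod 3) = 2 := by
      rw [← ZMod.natCast_mod m 3, hmod]
      decide
    push_cast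
    rw [hm3]
    decide
  rcases zmod_three dA dB dC hz3 with ⟨h1,h2,h3⟩|⟨h1,h2,h3⟩|⟨h1,h2,h3⟩
  · exact Or.inl ⟨hprodA.mpr h1, hprodB.mpr h2, fun hc => h3 (hprodC.mp hc)⟩
  · exact Or.inr (Or.inl ⟨hprodA.mpr h1, fun hb => h2 (hprodB.mp hb), hprodC.mpr h3⟩)
  · exact Or.inr (Or.inr ⟨fun ha => h1 (hprodA.mp ha), hprodB.mpr h2, hprodC.mpr h3⟩)
end

section
/- (Cross-correlation, 3 × s case.) Suppose that for each j ∈ {1,2,3}, the sequences A_j, B_j, C_j form a 3-phase length s Golay sequence triad, that for all integers u, C_{A₁,A₃}(u) + C_{B₁,B₃}(u) + C_{C₁,C₃}(u) = 0, and that for all integers u, C_{A₁,A₂}(u) + C_{A₂,A₃}(u) + C_{B₁,B₂}(u) + C_{B₂,B₃}(u) + C_{C₁,C₂}(u) + C_{C₂,C₃}(u) = 0. Define the 3 × s arrays U, V, W by U(j−1, i) = A_j(i), V(j−1, i) = B_j(i), W(j−1, i) = C_j(i) for j ∈ {1,2,3} (with value 0 when the row index is not in {0,1,2}). Then U, V,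 W form a 3-phase 3 × s Golay array triad. -/
open scoped BigOperators

/-- Aperiodic cross-correlation function
`C_{A,B}(u) = Σ_{i ∈ ℤ} A(i) conj(B(i+u))`. -/
noncomputable def crossCorr (A B : ℤ → ℂ) (u : ℤ) : ℂ :=
  ∑' i : ℤ, A i * (starRingEnd ℂ) (B (i + u))

/-- A 3-phase `s₁ × s₂` array: vanishes outside
`{0,…,s₁−1} × {0,…,s₂−1}` and takes values in `{1, ω, ω²}` on this index
set. -/
def IsThreePhaseArr2 (s₁ s₂ : ℕ) (D : ℤ → ℤ → ℂ) : Prop :=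
  (∀ i₁ i₂ : ℤ, (i₁ < 0 ∨ (s₁ : ℤ) ≤ i₁) ∨ (i₂ < 0 ∨ (s₂ : ℤ) ≤ i₂) → D i₁ i₂ = 0) ∧
    ∀ i₁ i₂ : ℤ, 0 ≤ i₁ → i₁ < (s₁ : ℤ) → 0 ≤ i₂ → i₂ < (s₂ : ℤ) →
      D i₁ i₂ ∈ ({1, ω, ω ^ 2} : Set ℂ)

/-- Aperiodic autocorrelation of a two-dimensional array. -/
noncomputable def aperCorr2 (D : ℤ → ℤ → ℂ) (u₁ u₂ : ℤ) : ℂ :=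
  ∑' p : ℤ × ℤ, D p.1 p.2 * (starRingEnd ℂ) (D (p.1 + u₁) (p.2 + u₂))

/-- Three 3-phase `s₁ × s₂` arrays forming a 3-phase Golay array triad. -/
def GolayArrTriad2 (s₁ s₂ : ℕ) (U V W : ℤ → ℤ → ℂ) : Prop :=
  IsThreePhaseArr2 s₁ s₂ U ∧ IsThreePhaseArr2 s₁ s₂ V ∧ IsThreePhaseArr2 s₁ s₂ W ∧
    ∀ u₁ u₂ : ℤ, ¬ (u₁ = 0 ∧ u₂ = 0) →
      aperCorr2 U u₁ u₂ + aperCorr2 V u₁ u₂ + aperCorr2 W u₁ u₂ = 0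

/-- The `2 × s` array with rows `X` and `Y` (zero off rows `0` and `1`). -/
def rows2 (X Y : ℤ → ℂ) : ℤ → ℤ → ℂ :=
  fun i₁ i => if i₁ = 0 then X i else if i₁ = 1 then Y i else 0

/-- The `3 × s` array with rows `X`, `Y`, `Z` (zero off rows `0`, `1`, `2`). -/
def rows3 (X Y Z : ℤ → ℂ) : ℤ → ℤ → ℂ :=
  fun i₁ i => if i₁ = 0 then X i else if i₁ = 1 then Y i else if i₁ = 2 then Z i else 0


section Aux

lemma crossCorr_eq_sum {s : ℕ} {X : ℤ → ℂ} (hX : IsLenSeq s X) (Y : ℤ → ℂ) (u : ℤ) :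
    crossCorr X Y u = ∑ i ∈ Finset.Ico (0:ℤ) (s:ℤ), X i * (starRingEnd ℂ) (Y (i + u)) := by
  refine tsum_eq_sum ?_
  intro i hi
  rw [Finset.mem_Ico] at hi
  have : X i = 0 := hX i (by omega)
  simp [this]

lemma crossCorr_zero_right (X Z : ℤ → ℂ) (hZ : ∀ i, Z i = 0) (u : ℤ) :
    crossCorr X Z u = 0 := by
  simp [crossCorr, hZ]

lemma crossCorr_swap (X Y : ℤ → ℂ) (u : ℤ) :
    crossCorr Y X u = (starRingEnd ℂ) (crossCorr X Y (-u)) := by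
  unfold crossCorr
  rw [starRingEnd_apply, tsum_star, ← (Equiv.addRight u).tsum_eq
    (fun i => star (X i * (starRingEnd ℂ) (Y (i + -u))))]
  congr 1
  funext j
  simp only [Equiv.coe_addRight, starRingEnd_apply, star_mul', star_star,
    add_neg_cancel_right]
  ring

lemma rows3_zero (X Y Z : ℤ → ℂ) : rows3 X Y Z 0 = X := by funext i; simp [rows3]
lemma rows3_one (X Y Z : ℤ → ℂ) : rows3 X Y Z 1 = Y := by funext i; simp [rows3]
lemma rows3_two (X Y Z : ℤ → ℂ) : rows3 X Y Z 2 = Z := by funext i; simp [rows3]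

lemma rows3_out (X Y Z : ℤ → ℂ) {j : ℤ} (h : j < 0 ∨ 2 < j) (i : ℤ) :
    rows3 X Y Z j i = 0 := by
  simp only [rows3]
  rw [if_neg (by omega), if_neg (by omega), if_neg (by omega)]

lemma rows3_out_fun (X Y Z : ℤ → ℂ) {j : ℤ} (h : j < 0 ∨ 2 < j) :
    rows3 X Y Z j = fun _ => 0 := funext (rows3_out X Y Z h)

lemma crossCorr_zero (X : ℤ → ℂ) (u : ℤ) : crossCorr X (fun _ => 0) u = 0 := by
  simp [crossCorr]

lemma rows3_row_len {s : ℕ} {X Y Z : ℤ → ℂ}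
    (hX : IsLenSeq s X) (hY : IsLenSeq s Y) (hZ : IsLenSeq s Z) (j : ℤ) :
    IsLenSeq s (rows3 X Y Z j) := by
  intro i hi
  by_cases e0 : j = 0
  · simp [rows3, e0, hX i hi]
  by_cases e1 : j = 1
  · simp [rows3, e0, e1, hY i hi]
  by_cases e2 : j = 2
  · simp [rows3, e0, e1, e2, hZ i hi]
  · simp [rows3, e0, e1, e2]

lemma aperCorr2_rows3 {s : ℕ} {X₁ X₂ X₃ : ℤ → ℂ}
    (h1 : IsLenSeq s X₁) (h2 : IsLenSeq s X₂) (h3 : IsLenSeq s X₃) (u₁ u₂ : ℤ) :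
    aperCorr2 (rows3 X₁ X₂ X₃) u₁ u₂ =
      crossCorr X₁ (rows3 X₁ X₂ X₃ (0 + u₁)) u₂ +
      crossCorr X₂ (rows3 X₁ X₂ X₃ (1 + u₁)) u₂ +
      crossCorr X₃ (rows3 X₁ X₂ X₃ (2 + u₁)) u₂ := by
  have hrow := rows3_row_len h1 h2 h3
  rw [aperCorr2, tsum_eq_sum
    (s := (Finset.Icc (0:ℤ) 2) ×ˢ (Finset.Ico (0:ℤ) (s:ℤ))) ?_]
  · rw [Finset.sum_product]
    have hicc : Finset.Icc (0:ℤ) 2 = {0, 1, 2} := by decide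
    rw [hicc, Finset.sum_insert (by decide), Finset.sum_insert (by decide),
      Finset.sum_singleton]
    rw [crossCorr_eq_sum h1, crossCorr_eq_sum h2, crossCorr_eq_sum h3]
    simp only [rows3]
    norm_num
    ring
  · intro p hp
    rw [Finset.mem_product] at hp
    by_cases h : p.1 ∈ Finset.Icc (0:ℤ) 2
    · have h2' : p.2 ∉ Finset.Ico (0:ℤ) (s:ℤ) := fun hh => hp ⟨h, hh⟩
      rw [Finset.mem_Ico] at h2'
      have := hrow p.1 p.2 (by omega)
      simp [this]
    · rw [Finset.mem_Icc] at h
      have := rows3_out X₁ X₂ X₃ (j := p.1) (by omega) p.2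
      simp [this]

lemma rows3_threePhase {s : ℕ} {X₁ X₂ X₃ : ℤ → ℂ} (h1 : IsThreePhaseSeq s X₁)
    (h2 : IsThreePhaseSeq s X₂) (h3 : IsThreePhaseSeq s X₃) :
    IsThreePhaseArr2 3 s (rows3 X₁ X₂ X₃) := by
  constructor
  · intro i₁ i₂ h
    rcases h with h | h
    · exact rows3_out X₁ X₂ X₃ (by omega) i₂
    · exact rows3_row_len h1.1 h2.1 h3.1 i₁ i₂ h
  · intro i₁ i₂ hi0 hi3 hj0 hjs
    have hi3' : i₁ < 3 := by exact_mod_cast hi3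
    interval_cases i₁
    · simpa [rows3] using h1.2 i₂ hj0 hjs
    · simpa [rows3] using h2.2 i₂ hj0 hjs
    · simpa [rows3] using h3.2 i₂ hj0 hjs

end Aux

/-- (Cross-correlation, `3 × s` case.) If `A_j, B_j, C_j` (`j = 1, 2, 3`) are
3-phase length-`s` Golay sequence triads with
`C_{A₁,A₃}(u) + C_{B₁,B₃}(u) + C_{C₁,C₃}(u) = 0` and
`C_{A₁,A₂}(u) + C_{A₂,A₃}(u) + C_{B₁,B₂}(u) + C_{B₂,B₃}(u) + C_{C₁,C₂}(u) +
C_{C₂,C₃}(u) = 0` for all `u`, then stacking them row-wise gives a 3-phase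
`3 × s` Golay array triad. -/
theorem cross_correlation_three_by_s (s : ℕ)
    (A₁ B₁ C₁ A₂ B₂ C₂ A₃ B₃ C₃ : ℤ → ℂ)
    (h1 : GolaySeqTriad s A₁ B₁ C₁) (h2 : GolaySeqTriad s A₂ B₂ C₂)
    (h3 : GolaySeqTriad s A₃ B₃ C₃)
    (hcc13 : ∀ u : ℤ,
      crossCorr A₁ A₃ u + crossCorr B₁ B₃ u + crossCorr C₁ C₃ u = 0)
    (hcc123 : ∀ u : ℤ,
      crossCorr A₁ A₂ u + crossCorr A₂ A₃ u + crossCorr B₁ B₂ u +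
        crossCorr B₂ B₃ u + crossCorr C₁ C₂ u + crossCorr C₂ C₃ u = 0) :
    GolayArrTriad2 3 s (rows3 A₁ A₂ A₃) (rows3 B₁ B₂ B₃) (rows3 C₁ C₂ C₃) := by
  obtain ⟨hA1, hB1, hC1, hg1⟩ := h1
  obtain ⟨hA2, hB2, hC2, hg2⟩ := h2
  obtain ⟨hA3, hB3, hC3, hg3⟩ := h3
  refine ⟨rows3_threePhase hA1 hA2 hA3, rows3_threePhase hB1 hB2 hB3,
    rows3_threePhase hC1 hC2 hC3, ?_⟩
  intro u₁ u₂ hu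
  rw [aperCorr2_rows3 hA1.1 hA2.1 hA3.1, aperCorr2_rows3 hB1.1 hB2.1 hB3.1,
    aperCorr2_rows3 hC1.1 hC2.1 hC3.1]
  have hcases : u₁ = 0 ∨ u₁ = 1 ∨ u₁ = 2 ∨ u₁ = -1 ∨ u₁ = -2 ∨ (u₁ < -2 ∨ 2 < u₁) := by
    omega
  rcases hcases with rfl | rfl | rfl | rfl | rfl | hbig
  · have hu₂ : u₂ ≠ 0 := fun h => hu ⟨rfl, h⟩
    norm_num [rows3_zero, rows3_one, rows3_two]
    have e : ∀ X : ℤ → ℂ, crossCorr X X u₂ = aperCorr X u₂ := fun _ => rfl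
    have g1 := hg1 u₂ hu₂
    have g2 := hg2 u₂ hu₂
    have g3 := hg3 u₂ hu₂
    simp only [← e] at g1 g2 g3
    linear_combination g1 + g2 + g3
  · norm_num [rows3_one, rows3_two,
      rows3_out_fun A₁ A₂ A₃ (j := 3) (by omega),
      rows3_out_fun B₁ B₂ B₃ (j := 3) (by omega),
      rows3_out_fun C₁ C₂ C₃ (j := 3) (by omega), crossCorr_zero]
    linear_combination hcc123 u₂
  · norm_num [rows3_two,
      rows3_out_fun A₁ A₂ A₃ (j := 3) (by omega),
      rows3_out_fun B₁ B₂ B₃ (j := 3) (by omega),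
      rows3_out_fun C₁ C₂ C₃ (j := 3) (by omega),
      rows3_out_fun A₁ A₂ A₃ (j := 4) (by omega),
      rows3_out_fun B₁ B₂ B₃ (j := 4) (by omega),
      rows3_out_fun C₁ C₂ C₃ (j := 4) (by omega), crossCorr_zero]
    linear_combination hcc13 u₂
  · norm_num [rows3_zero, rows3_one,
      rows3_out_fun A₁ A₂ A₃ (j := -1) (by omega),
      rows3_out_fun B₁ B₂ B₃ (j := -1) (by omega),
      rows3_out_fun C₁ C₂ C₃ (j := -1) (by omega), crossCorr_zero]
    have key := congrArg (starRingEnd ℂ) (hcc123 (-u₂))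
    simp only [map_add, map_zero] at key
    rw [crossCorr_swap A₁ A₂ u₂, crossCorr_swap A₂ A₃ u₂,
      crossCorr_swap B₁ B₂ u₂, crossCorr_swap B₂ B₃ u₂,
      crossCorr_swap C₁ C₂ u₂, crossCorr_swap C₂ C₃ u₂]
    linear_combination key
  · norm_num [rows3_zero,
      rows3_out_fun A₁ A₂ A₃ (j := -2) (by omega),
      rows3_out_fun B₁ B₂ B₃ (j := -2) (by omega),
      rows3_out_fun C₁ C₂ C₃ (j := -2) (by omega),
      rows3_out_fun A₁ A₂ A₃ (j := -1) (by omega),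
      rows3_out_fun B₁ B₂ B₃ (j := -1) (by omega),
      rows3_out_fun C₁ C₂ C₃ (j := -1) (by omega), crossCorr_zero]
    have key := congrArg (starRingEnd ℂ) (hcc13 (-u₂))
    simp only [map_add, map_zero] at key
    rw [crossCorr_swap A₁ A₃ u₂, crossCorr_swap B₁ B₃ u₂, crossCorr_swap C₁ C₃ u₂]
    linear_combination key
  · rw [rows3_out_fun A₁ A₂ A₃ (j := 0 + u₁) (by omega),
      rows3_out_fun A₁ A₂ A₃ (j := 1 + u₁) (by omega),
      rows3_out_fun A₁ A₂ A₃ (j := 2 + u₁) (by omega),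
      rows3_out_fun B₁ B₂ B₃ (j := 0 + u₁) (by omega),
      rows3_out_fun B₁ B₂ B₃ (j := 1 + u₁) (by omega),
      rows3_out_fun B₁ B₂ B₃ (j := 2 + u₁) (by omega),
      rows3_out_fun C₁ C₂ C₃ (j := 0 + u₁) (by omega),
      rows3_out_fun C₁ C₂ C₃ (j := 1 + u₁) (by omega),
      rows3_out_fun C₁ C₂ C₃ (j := 2 + u₁) (by omega)]
    simp [crossCorr_zero]
end
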